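/- arXiv:1703.04193 — 2 statements merged into one kernel-verified Lean document; each statement's English description precedes it below -/
import Mathlib

section
/- Define U_5 : (Z/2)[[x]] → (Z/2)[[x]] by U_5(Σ c_n x^n) = Σ c_{5n} x^n. Let F = Σ_{k≥0} x^{(2k+1)^2}, G = F(x^5), V' the Z/2-span of the G^k with k odd, and V the Z/2-span of the F^k with k odd. Then U_5 maps V' bijectively onto V and commutes with T_p on V' for every odd prime p ≠ 5. -/
open scoped Classical

noncomputable def F : PowerSeries (ZMod 2) :=
  PowerSeries.mk fun n => if ∃ k, n = (2 * k + 1) ^ 2 then 1 else 0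

/-- `G = F(x^5)`. -/
noncomputable def G : PowerSeries (ZMod 2) :=
  PowerSeries.mk fun n => if ∃ k, n = 5 * (2 * k + 1) ^ 2 then 1 else 0

/-- The formal Hecke operator `T_p`. -/
noncomputable def T (p : ℕ) (f : PowerSeries (ZMod 2)) : PowerSeries (ZMod 2) :=
  PowerSeries.mk fun n =>
    PowerSeries.coeff (p * n) f +
      if p ∣ n then PowerSeries.coeff (n / p) f else 0

/-- `U_5 : Σ c_n x^n ↦ Σ c_{5n} x^n`. -/
noncomputable def U5 (f : PowerSeries (ZMod 2)) : PowerSeries (ZMod 2) :=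
  PowerSeries.mk fun n => PowerSeries.coeff (5 * n) f

/-- `V` is the span of the `F^k`, `k` odd. -/
noncomputable def V : Submodule (ZMod 2) (PowerSeries (ZMod 2)) :=
  Submodule.span (ZMod 2) {f | ∃ k, Odd k ∧ f = F ^ k}

/-- `V'` is the span of the `G^k`, `k` odd. -/
noncomputable def V' : Submodule (ZMod 2) (PowerSeries (ZMod 2)) :=
  Submodule.span (ZMod 2) {f | ∃ k, Odd k ∧ f = G ^ k}

/-- Substitution `x ↦ x^5`. -/
noncomputable def S5 (f : PowerSeries (ZMod 2)) : PowerSeries (ZMod 2) :=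
  PowerSeries.mk fun n => if 5 ∣ n then PowerSeries.coeff (n / 5) f else 0

lemma U5_add (f g : PowerSeries (ZMod 2)) : U5 (f + g) = U5 f + U5 g := by
  ext n; simp [U5]

lemma U5_smul (c : ZMod 2) (f : PowerSeries (ZMod 2)) : U5 (c • f) = c • U5 f := by
  ext n; simp [U5]

lemma U5_zero : U5 0 = 0 := by ext n; simp [U5]

lemma S5_add (f g : PowerSeries (ZMod 2)) : S5 (f + g) = S5 f + S5 g := by
  ext n
  simp only [S5, PowerSeries.coeff_mk, map_add]
  split_ifs <;> simp

lemma S5_smul (c : ZMod 2) (f : PowerSeries (ZMod 2)) : S5 (c • f) = c • S5 f := by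
  ext n
  simp only [S5, PowerSeries.coeff_mk, PowerSeries.coeff_smul, smul_ite]
  split_ifs <;> simp

lemma U5_S5 (f : PowerSeries (ZMod 2)) : U5 (S5 f) = f := by
  ext n
  simp [U5, S5, Nat.mul_div_cancel_left n (by norm_num : (0:ℕ) < 5)]

lemma S5_mul (f g : PowerSeries (ZMod 2)) : S5 (f * g) = S5 f * S5 g := by
  ext n
  simp only [S5, PowerSeries.coeff_mk, PowerSeries.coeff_mul]
  by_cases h : 5 ∣ n
  · obtain ⟨m, rfl⟩ := h
    rw [if_pos (dvd_mul_right 5 m), Nat.mul_div_cancel_left m (by norm_num : (0:ℕ) < 5)]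
    symm
    rw [← Finset.sum_filter_of_ne (p := fun p : ℕ × ℕ => 5 ∣ p.1)
      (by
        intro p hp hne
        by_contra hd
        simp [if_neg hd] at hne)]
    refine Finset.sum_nbij' (i := fun p : ℕ × ℕ => (p.1 / 5, p.2 / 5))
      (j := fun q : ℕ × ℕ => (5 * q.1, 5 * q.2)) ?_ ?_ ?_ ?_ ?_
    · intro p hp
      simp only [Finset.mem_filter, Finset.HasAntidiagonal.mem_antidiagonal] at hp
      obtain ⟨hsum, c, hc⟩ := hp
      have h2 : 5 ∣ p.2 := ⟨m - c, by omega⟩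
      obtain ⟨d, hd⟩ := h2
      rw [Finset.HasAntidiagonal.mem_antidiagonal]
      simp only [hc, hd]
      rw [Nat.mul_div_cancel_left c (by norm_num), Nat.mul_div_cancel_left d (by norm_num)]
      omega
    · intro q hq
      rw [Finset.HasAntidiagonal.mem_antidiagonal] at hq
      simp only [Finset.mem_filter, Finset.HasAntidiagonal.mem_antidiagonal]
      exact ⟨by omega, ⟨q.1, rfl⟩⟩
    · intro p hp
      simp only [Finset.mem_filter, Finset.HasAntidiagonal.mem_antidiagonal] at hp
      obtain ⟨hsum, c, hc⟩ := hp
      have h2 : 5 ∣ p.2 := ⟨m - c, by omega⟩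
      obtain ⟨d, hd⟩ := h2
      simp only [hc, hd]
      rw [Nat.mul_div_cancel_left c (by norm_num), Nat.mul_div_cancel_left d (by norm_num)]
      exact Prod.ext hc.symm hd.symm
    · intro q hq
      simp [Nat.mul_div_cancel_left _ (by norm_num : (0:ℕ) < 5)]
    · intro p hp
      simp only [Finset.mem_filter, Finset.HasAntidiagonal.mem_antidiagonal] at hp
      obtain ⟨hsum, c, hc⟩ := hp
      have h2 : 5 ∣ p.2 := ⟨m - c, by omega⟩
      obtain ⟨d, hd⟩ := h2
      simp only [hc, hd]
      rw [if_pos ⟨c, rfl⟩, if_pos ⟨d, rfl⟩,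
        Nat.mul_div_cancel_left c (by norm_num : (0:ℕ) < 5),
        Nat.mul_div_cancel_left d (by norm_num : (0:ℕ) < 5)]
  · rw [if_neg h]
    symm
    refine Finset.sum_eq_zero fun p hp => ?_
    rw [Finset.HasAntidiagonal.mem_antidiagonal] at hp
    by_cases h1 : 5 ∣ p.1
    · have h2 : ¬ 5 ∣ p.2 := fun h2 => h (hp ▸ Nat.dvd_add h1 h2)
      simp [if_neg h2]
    · simp [if_neg h1]

lemma G_eq : G = S5 F := by
  ext n
  simp only [G, F, S5, PowerSeries.coeff_mk]
  by_cases h : 5 ∣ n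
  · obtain ⟨m, rfl⟩ := h
    rw [if_pos (dvd_mul_right 5 m), Nat.mul_div_cancel_left m (by norm_num : (0:ℕ) < 5)]
    congr 1
    exact propext ⟨fun ⟨k, hk⟩ => ⟨k, by omega⟩, fun ⟨k, hk⟩ => ⟨k, by omega⟩⟩
  · rw [if_neg h, if_neg]
    rintro ⟨k, rfl⟩
    exact h ⟨(2 * k + 1) ^ 2, rfl⟩

lemma S5_pow (f : PowerSeries (ZMod 2)) (k : ℕ) (hk : 1 ≤ k) :
    S5 (f ^ k) = (S5 f) ^ k := by
  induction k with
  | zero => omega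
  | succ k ih =>
    rcases Nat.eq_or_lt_of_le hk with h | h
    · simp [← h]
    · rw [pow_succ, pow_succ, S5_mul, ih (by omega)]

lemma G_pow (k : ℕ) (hk : 1 ≤ k) : G ^ k = S5 (F ^ k) := by
  rw [S5_pow F k hk, G_eq]

lemma S5_U5_of_mem (f : PowerSeries (ZMod 2)) (hf : f ∈ V') : S5 (U5 f) = f := by
  induction hf using Submodule.span_induction with
  | mem g hg =>
    obtain ⟨k, hk, rfl⟩ := hg
    rw [G_pow k hk.pos, U5_S5]
  | zero => rw [U5_zero]; ext n; simp [S5]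
  | add g₁ g₂ _ _ h1 h2 => rw [U5_add, S5_add, h1, h2]
  | smul c g _ h => rw [U5_smul, S5_smul, h]

lemma U5_mem (f : PowerSeries (ZMod 2)) (hf : f ∈ V') : U5 f ∈ V := by
  induction hf using Submodule.span_induction with
  | mem g hg =>
    obtain ⟨k, hk, rfl⟩ := hg
    rw [G_pow k hk.pos, U5_S5]
    exact Submodule.subset_span ⟨k, hk, rfl⟩
  | zero => rw [U5_zero]; exact zero_mem V
  | add g₁ g₂ _ _ h1 h2 => rw [U5_add]; exact add_mem h1 h2
  | smul c g _ h => rw [U5_smul]; exact Submodule.smul_mem V c h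

lemma U5_surj (g : PowerSeries (ZMod 2)) (hg : g ∈ V) : ∃ f ∈ V', U5 f = g := by
  induction hg using Submodule.span_induction with
  | mem g hg =>
    obtain ⟨k, hk, rfl⟩ := hg
    exact ⟨G ^ k, Submodule.subset_span ⟨k, hk, rfl⟩, by rw [G_pow k hk.pos, U5_S5]⟩
  | zero => exact ⟨0, zero_mem V', U5_zero⟩
  | add g₁ g₂ _ _ h1 h2 =>
    obtain ⟨f₁, hf₁, rfl⟩ := h1
    obtain ⟨f₂, hf₂, rfl⟩ := h2
    exact ⟨f₁ + f₂, add_mem hf₁ hf₂, U5_add f₁ f₂⟩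
  | smul c g _ h =>
    obtain ⟨f, hf, rfl⟩ := h
    exact ⟨c • f, Submodule.smul_mem V' c hf, U5_smul c f⟩

theorem stmt_12 :
    Set.BijOn U5 (V' : Set (PowerSeries (ZMod 2))) (V : Set (PowerSeries (ZMod 2))) ∧
    ∀ p : ℕ, p.Prime → Odd p → p ≠ 5 →
      ∀ f ∈ V', U5 (T p f) = T p (U5 f) := by
  constructor
  · refine ⟨fun f hf => U5_mem f hf, ?_, ?_⟩
    · intro f hf g hg h
      rw [← S5_U5_of_mem f hf, ← S5_U5_of_mem g hg, h]
    · intro g hg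
      obtain ⟨f, hf, hfg⟩ := U5_surj g hg
      exact ⟨f, hf, hfg⟩
  · intro p hp hodd hne f _
    have hp5 : ¬ p ∣ 5 := fun h =>
      hne ((Nat.prime_dvd_prime_iff_eq hp (by norm_num)).mp h)
    ext n
    simp only [U5, T, PowerSeries.coeff_mk]
    have hdvd : p ∣ 5 * n ↔ p ∣ n := by
      constructor
      · intro h
        rcases (Nat.Prime.dvd_mul hp).mp h with h | h
        · exact absurd h hp5
        · exact h
      · exact fun h => Dvd.dvd.mul_left h 5
    rw [show p * (5 * n) = 5 * (p * n) by ring]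
    congr 1
    by_cases h : p ∣ n
    · rw [if_pos ((hdvd).mpr h), if_pos h, Nat.mul_div_assoc 5 h]
    · rw [if_neg (fun hc => h (hdvd.mp hc)), if_neg h]
end

section
/- Let P = (Z/2)[[t1,t2,t3,t4]] with maximal ideal m, and suppose A, B, C, ε ∈ m with (degree-1) leading forms of A, B, C linearly independent, ε ≡ A mod m^2, and A^2 − ε^2 ∈ (A,B,C). Then A − ε ∈ mA + mB + mC; consequently one can replace A by A + a and ε by ε + c with a ∈ mA + mB, c ∈ mC so that the new A equals the new ε. -/
/-- The 4-variable power series ring `P = (Z/2)[[t1,t2,t3,t4]]`. -/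
abbrev P : Type := MvPowerSeries (Fin 4) (ZMod 2)

/-- The maximal ideal `m` of `P`. -/
noncomputable def m : Ideal P := IsLocalRing.maximalIdeal P

/-- The degree-1 part of a power series, as a linear form. -/
noncomputable def linPart (A : P) : Fin 4 → ZMod 2 :=
  fun i => MvPowerSeries.coeff (Finsupp.single i 1) A

namespace Aux
section PS
open MvPowerSeries

abbrev K := ZMod 2
abbrev Poly := MvPolynomial (Fin 4) K

/-- total degree of an exponent -/
def dg (d : Fin 4 →₀ ℕ) : ℕ := ∑ i, d i

lemma dg_eq_degree (d : Fin 4 →₀ ℕ) : dg d = d.degree := by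
  rw [Finsupp.degree, dg]
  exact (Finset.sum_subset (Finset.subset_univ _) (by
    intro x _ hx
    simpa using Finsupp.notMem_support_iff.mp hx)).symm

lemma dg_add (a b : Fin 4 →₀ ℕ) : dg (a + b) = dg a + dg b := by
  simp [dg, Finset.sum_add_distrib]

lemma dg_zero : dg 0 = 0 := by simp [dg]

lemma dg_eq_zero {d : Fin 4 →₀ ℕ} (h : dg d = 0) : d = 0 := by
  rw [dg_eq_degree] at h
  exact (Finsupp.degree_eq_zero_iff d).mp h

lemma dg_le_of_le {a d : Fin 4 →₀ ℕ} (h : a ≤ d) : dg a ≤ dg d := by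
  obtain ⟨c, rfl⟩ := exists_add_of_le h
  simp [dg_add]

lemma dg_single (i : Fin 4) (n : ℕ) : dg (Finsupp.single i n) = n := by
  simp [dg, Finsupp.single_apply, Finset.sum_ite_eq']

lemma dg_eq_one {d : Fin 4 →₀ ℕ} (h : dg d = 1) : ∃ i, d = Finsupp.single i 1 := by
  have : ∃ i, d i ≠ 0 := by
    by_contra hc
    push_neg at hc
    have : d = 0 := Finsupp.ext fun i => hc i
    simp [this, dg_zero] at h
  obtain ⟨i, hi⟩ := this
  refine ⟨i, ?_⟩
  have hsum : d i + ∑ j ∈ Finset.univ.erase i, d j = 1 := by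
    rw [← h, dg, ← Finset.add_sum_erase _ _ (Finset.mem_univ i)]
  have hdi : d i = 1 := by omega
  have hzero : ∑ j ∈ Finset.univ.erase i, d j = 0 := by omega
  have hrest : ∀ j ∈ Finset.univ.erase i, d j = 0 :=
    Finset.sum_eq_zero_iff.mp hzero
  ext j
  rcases eq_or_ne j i with rfl | hj
  · simp [hdi]
  · have := hrest j (Finset.mem_erase.mpr ⟨hj, Finset.mem_univ j⟩)
    simp [Finsupp.single_apply, this, Ne.symm hj]

/-- The ideal of power series of order at least `n`. -/
noncomputable def Mi (n : ℕ) : Ideal P where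
  carrier := {f | ∀ d, dg d < n → coeff d f = 0}
  add_mem' := by intro a b ha hb d hd; simp [map_add, ha d hd, hb d hd]
  zero_mem' := by intro d _; simp
  smul_mem' := by
    intro c f hf d hd
    rw [smul_eq_mul, coeff_mul]
    apply Finset.sum_eq_zero
    rintro ⟨a, b⟩ hab
    rw [Finset.HasAntidiagonal.mem_antidiagonal] at hab
    have hb : dg b < n := by
      have : dg a + dg b = dg d := by rw [← dg_add, hab]
      omega
    simp [hf b hb]

lemma mem_Mi {n : ℕ} {f : P} : f ∈ Mi n ↔ ∀ d, dg d < n → coeff d f = 0 := Iff.rfl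

lemma Mi_antitone {a b : ℕ} (h : a ≤ b) : Mi b ≤ Mi a := by
  intro f hf d hd
  exact hf d (lt_of_lt_of_le hd h)

lemma mul_mem_Mi {p q : ℕ} {f g : P} (hf : f ∈ Mi p) (hg : g ∈ Mi q) :
    f * g ∈ Mi (p + q) := by
  intro d hd
  rw [coeff_mul]
  apply Finset.sum_eq_zero
  rintro ⟨a, b⟩ hab
  rw [Finset.HasAntidiagonal.mem_antidiagonal] at hab
  have hsum : dg a + dg b = dg d := by rw [← dg_add, hab]
  rcases lt_or_ge (dg a) p with h1 | h1
  · simp [hf a h1]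
  · have : dg b < q := by omega
    simp [hg b this]

lemma mem_m_iff {f : P} : f ∈ m ↔ constantCoeff f = 0 := by
  rw [m, IsLocalRing.mem_maximalIdeal, mem_nonunits_iff, isUnit_iff_constantCoeff]
  simp [isUnit_iff_ne_zero]
  generalize constantCoeff f = x
  revert x
  decide

lemma Mi_one_le_m : Mi 1 ≤ m := by
  intro f hf
  rw [mem_m_iff, ← coeff_zero_eq_constantCoeff_apply]
  exact hf 0 (by simp [dg_zero])

lemma m_le_Mi_one : m ≤ Mi 1 := by
  intro f hf d hd
  have : d = 0 := dg_eq_zero (by omega)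
  subst this
  rw [coeff_zero_eq_constantCoeff_apply]
  exact mem_m_iff.mp hf

lemma m_sq_le_Mi_two : m ^ 2 ≤ Mi 2 := by
  rw [pow_two]
  rw [Ideal.mul_le]
  intro r hr s hs
  exact mul_mem_Mi (m_le_Mi_one hr) (m_le_Mi_one hs)


noncomputable def bnd (n : ℕ) : Fin 4 →₀ ℕ := Finsupp.equivFunOnFinite.symm (fun _ => n + 1)

lemma bnd_apply (n : ℕ) (i : Fin 4) : bnd n i = n + 1 := rfl

/-- the degree-`n` homogeneous component, as a polynomial -/
noncomputable def cmpP (n : ℕ) (f : P) : Poly :=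
  MvPolynomial.homogeneousComponent n (trunc K (bnd n) f)

lemma coeff_cmpP (n : ℕ) (f : P) (d : Fin 4 →₀ ℕ) :
    MvPolynomial.coeff d (cmpP n f) = if dg d = n then coeff d f else 0 := by
  rw [cmpP, MvPolynomial.coeff_homogeneousComponent, ← dg_eq_degree]
  split_ifs with h
  · rw [coeff_trunc]
    have hlt : d < bnd n := by
      constructor
      · intro i
        rw [bnd_apply]
        have : d i ≤ dg d := Finset.single_le_sum (fun j _ => Nat.zero_le _) (Finset.mem_univ i)
        omega
      · intro hle
        have := hle 0
        rw [bnd_apply] at this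
        have h0 : d 0 ≤ dg d := Finset.single_le_sum (fun j _ => Nat.zero_le _) (Finset.mem_univ 0)
        omega
    rw [if_pos hlt]
  · rfl

lemma cmpP_isHomogeneous (n : ℕ) (f : P) : (cmpP n f).IsHomogeneous n :=
  MvPolynomial.homogeneousComponent_isHomogeneous n _

lemma coeff_homog_ne {p : Poly} {n : ℕ} (hp : p.IsHomogeneous n) {d : Fin 4 →₀ ℕ}
    (hd : dg d ≠ n) : MvPolynomial.coeff d p = 0 :=
  hp.coeff_eq_zero (by rwa [← dg_eq_degree])

lemma cmpP_sub (n : ℕ) (f g : P) : cmpP n (f - g) = cmpP n f - cmpP n g := by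
  apply MvPolynomial.ext
  intro d
  simp only [MvPolynomial.coeff_sub, coeff_cmpP, map_sub]
  split_ifs <;> simp

lemma cmpP_add (n : ℕ) (f g : P) : cmpP n (f + g) = cmpP n f + cmpP n g := by
  apply MvPolynomial.ext
  intro d
  simp only [MvPolynomial.coeff_add, coeff_cmpP, map_add]
  split_ifs <;> simp

lemma cmpP_eq_zero {n j : ℕ} {f : P} (hf : f ∈ Mi n) (hj : j < n) : cmpP j f = 0 := by
  apply MvPolynomial.ext
  intro d
  rw [coeff_cmpP, MvPolynomial.coeff_zero]
  split_ifs with h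
  · exact hf d (by omega)
  · rfl

lemma coe_homog_mem_Mi {p : Poly} {n : ℕ} (hp : p.IsHomogeneous n) :
    (↑p : P) ∈ Mi n := by
  intro d hd
  rw [MvPolynomial.coeff_coe]
  exact coeff_homog_ne hp (by omega)

lemma cmpP_coe_mem_Mi (n : ℕ) (f : P) : (↑(cmpP n f) : P) ∈ Mi n :=
  coe_homog_mem_Mi (cmpP_isHomogeneous n f)

lemma sub_cmpP_mem {n : ℕ} {f : P} (hf : f ∈ Mi n) :
    f - ↑(cmpP n f) ∈ Mi (n + 1) := by
  intro d hd
  rw [map_sub, MvPolynomial.coeff_coe, coeff_cmpP]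
  split_ifs with h
  · ring
  · rw [hf d (by omega), sub_zero]

lemma cmpP_mul {p q : ℕ} {f g : P} (hf : f ∈ Mi p) (hg : g ∈ Mi q) :
    cmpP (p + q) (f * g) = cmpP p f * cmpP q g := by
  apply MvPolynomial.ext
  intro d
  rw [coeff_cmpP, MvPolynomial.coeff_mul]
  split_ifs with h
  · rw [coeff_mul]
    apply Finset.sum_congr rfl
    rintro ⟨a, b⟩ hab
    rw [Finset.HasAntidiagonal.mem_antidiagonal] at hab
    have hsum : dg a + dg b = dg d := by rw [← dg_add, hab]
    simp only [coeff_cmpP]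
    rcases eq_or_ne (dg a) p with ha | ha
    · have hb : dg b = q := by omega
      rw [if_pos ha, if_pos hb]
    · rcases lt_or_ge (dg a) p with h1 | h1
      · rw [hf a h1, if_neg ha, zero_mul]
        split_ifs <;> ring
      · have hb : dg b < q := by omega
        rw [hg b hb, if_neg ha, zero_mul, mul_zero]
  · symm
    apply Finset.sum_eq_zero
    rintro ⟨a, b⟩ hab
    rw [Finset.HasAntidiagonal.mem_antidiagonal] at hab
    have hsum : dg a + dg b = dg d := by rw [← dg_add, hab]
    simp only [coeff_cmpP]
    rcases eq_or_ne (dg a) p with ha | ha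
    · have hb : dg b ≠ q := by omega
      rw [if_neg hb, mul_zero]
    · rw [if_neg ha, zero_mul]

lemma hc_mul_homog1 (t : ℕ) (p L : Poly) (hL : L.IsHomogeneous 1) :
    MvPolynomial.homogeneousComponent (t + 1) (p * L) =
      MvPolynomial.homogeneousComponent t p * L := by
  apply MvPolynomial.ext
  intro d
  rw [MvPolynomial.coeff_homogeneousComponent, ← dg_eq_degree, MvPolynomial.coeff_mul,
    MvPolynomial.coeff_mul]
  split_ifs with h
  · apply Finset.sum_congr rfl
    rintro ⟨a, b⟩ hab
    rw [Finset.HasAntidiagonal.mem_antidiagonal] at hab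
    have hsum : dg a + dg b = dg d := by rw [← dg_add, hab]
    rw [MvPolynomial.coeff_homogeneousComponent, ← dg_eq_degree]
    rcases eq_or_ne (MvPolynomial.coeff b L) 0 with hb | hb
    · rw [hb, mul_zero, mul_zero]
    · have hbdeg : dg b = 1 := by
        by_contra hc
        exact hb (coeff_homog_ne hL hc)
      have : dg a = t := by omega
      rw [if_pos this]
  · symm
    apply Finset.sum_eq_zero
    rintro ⟨a, b⟩ hab
    rw [Finset.HasAntidiagonal.mem_antidiagonal] at hab
    have hsum : dg a + dg b = dg d := by rw [← dg_add, hab]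
    rw [MvPolynomial.coeff_homogeneousComponent, ← dg_eq_degree]
    rcases eq_or_ne (MvPolynomial.coeff b L) 0 with hb | hb
    · rw [hb, mul_zero]
    · have hbdeg : dg b = 1 := by
        by_contra hc
        exact hb (coeff_homog_ne hL hc)
      have : dg a ≠ t := by omega
      rw [if_neg this, zero_mul]

end PS

section Syzygy
open MvPolynomial

lemma X_dvd_of_coeff {i : Fin 4} {p : Poly} (h : ∀ d, d i = 0 → coeff d p = 0) :
    (X i : Poly) ∣ p := by
  rw [X_dvd_iff_modMonomial_eq_zero]
  apply MvPolynomial.ext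
  intro d
  by_cases hle : Finsupp.single i 1 ≤ d
  · rw [coeff_modMonomial_of_le _ hle, coeff_zero]
  · rw [coeff_modMonomial_of_not_le _ hle, coeff_zero]
    apply h
    have := Finsupp.single_le_iff.not.mp hle
    omega

lemma syz0 (F G H : Poly) (hrel : F * X 0 + G * X 1 + H * X 2 = 0) :
    ∃ Pp Qq Rr : Poly, F = Pp * X 1 + Qq * X 2 ∧ G = -(Pp * X 0) + Rr * X 2 ∧
      H = -(Qq * X 0) - Rr * X 1 := by
  set G1 := G.divMonomial (Finsupp.single 0 1) with hG1
  set G0 := G.modMonomial (Finsupp.single 0 1) with hG0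
  set H1 := H.divMonomial (Finsupp.single 0 1) with hH1
  set H0 := H.modMonomial (Finsupp.single 0 1) with hH0
  have hG : X 0 * G1 + G0 = G := divMonomial_add_modMonomial_single G 0
  have hH : X 0 * H1 + H0 = H := divMonomial_add_modMonomial_single H 0
  have h2 : X 0 * (F + G1 * X 1 + H1 * X 2) + (G0 * X 1 + H0 * X 2) = 0 := by
    linear_combination hrel + X 1 * hG + X 2 * hH
  have hGH0 : G0 * X 1 + H0 * X 2 = 0 := by
    apply MvPolynomial.ext
    intro d
    rw [coeff_zero, coeff_add]
    rcases Nat.eq_zero_or_pos (d 0) with hd0 | hd0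
    · have hcoeff := congrArg (coeff d) h2
      rw [coeff_zero, coeff_add, mul_comm (X 0), coeff_mul_X'] at hcoeff
      rw [if_neg (by simp [Finsupp.mem_support_iff, hd0])] at hcoeff
      rw [coeff_add] at hcoeff
      linear_combination hcoeff
    · have e1 : coeff d (G0 * X 1) = 0 := by
        rw [coeff_mul_X']
        split_ifs with h1
        · apply coeff_modMonomial_of_le
          rw [Finsupp.single_le_iff, Finsupp.tsub_apply]
          simp only [Finsupp.single_apply]
          rw [if_neg (by decide)]
          omega
        · rfl
      have e2 : coeff d (H0 * X 2) = 0 := by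
        rw [coeff_mul_X']
        split_ifs with h1
        · apply coeff_modMonomial_of_le
          rw [Finsupp.single_le_iff, Finsupp.tsub_apply]
          simp only [Finsupp.single_apply]
          rw [if_neg (by decide)]
          omega
        · rfl
      rw [e1, e2, add_zero]
  have hZ : F + G1 * X 1 + H1 * X 2 = 0 := by
    have hx : X 0 * (F + G1 * X 1 + H1 * X 2) = 0 := by linear_combination h2 - hGH0
    rcases mul_eq_zero.mp hx with h | h
    · exact absurd h (X_ne_zero 0)
    · exact h
  have hdvd : (X 2 : Poly) ∣ G0 := by
    apply X_dvd_of_coeff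
    intro d hd2
    have : coeff d G0 = coeff (d + Finsupp.single 1 1) (G0 * X 1) := (coeff_mul_X d 1 G0).symm
    rw [this]
    have hG0X : G0 * X 1 = -(H0 * X 2) := by linear_combination hGH0
    rw [hG0X, coeff_neg, coeff_mul_X']
    rw [if_neg]
    · ring
    · simp only [Finsupp.mem_support_iff, Finsupp.add_apply, Finsupp.single_apply]
      simp [hd2]
  obtain ⟨S, hS⟩ := hdvd
  have hH0 : H0 = -(S * X 1) := by
    have hx : X 2 * (S * X 1 + H0) = 0 := by
      rw [hS] at hGH0
      linear_combination hGH0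
    rcases mul_eq_zero.mp hx with h | h
    · exact absurd h (X_ne_zero 2)
    · linear_combination h
  refine ⟨-G1, -H1, S, ?_, ?_, ?_⟩
  · linear_combination hZ
  · linear_combination -hG + hS
  · linear_combination -hH + hH0

noncomputable def ev0 : Poly →ₐ[K] Poly :=
  aeval (fun i : Fin 4 => if i.val ≤ 2 then 0 else X i)

lemma ev0_X_le {i : Fin 4} (h : i.val ≤ 2) : ev0 (X i) = 0 := by
  rw [ev0, aeval_X, if_pos h]

lemma mem3_of_ev0 (p : Poly) : ∃ u v w : Poly, p = u * X 0 + v * X 1 + w * X 2 + ev0 p := by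
  induction p using MvPolynomial.induction_on with
  | C a => exact ⟨0, 0, 0, by simp [ev0, aeval_C, algebraMap_eq]⟩
  | add p q hp hq =>
    obtain ⟨u1, v1, w1, h1⟩ := hp
    obtain ⟨u2, v2, w2, h2⟩ := hq
    exact ⟨u1 + u2, v1 + v2, w1 + w2, by rw [map_add]; linear_combination h1 + h2⟩
  | mul_X p i hp =>
    obtain ⟨u, v, w, h⟩ := hp
    fin_cases i <;> simp only [show (⟨0, by omega⟩ : Fin 4) = 0 from rfl,
      show (⟨1, by omega⟩ : Fin 4) = 1 from rfl, show (⟨2, by omega⟩ : Fin 4) = 2 from rfl,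
      show (⟨3, by omega⟩ : Fin 4) = 3 from rfl]
    · exact ⟨p, 0, 0, by rw [map_mul, ev0_X_le (by norm_num)]; ring⟩
    · exact ⟨0, p, 0, by rw [map_mul, ev0_X_le (by norm_num)]; ring⟩
    · exact ⟨0, 0, p, by rw [map_mul, ev0_X_le (by norm_num)]; ring⟩
    · refine ⟨u * X 3, v * X 3, w * X 3, ?_⟩
      rw [map_mul]
      have h3 : ev0 (X (3 : Fin 4)) = X 3 := by rw [ev0, aeval_X]; rw [if_neg (by decide)]
      rw [h3]
      linear_combination X (3:Fin 4) * h

lemma pr0 (q a b c : Poly) (hq : q * q = a * X 0 + b * X 1 + c * X 2) :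
    ∃ u v w : Poly, q = u * X 0 + v * X 1 + w * X 2 := by
  have h0 : ev0 q * ev0 q = 0 := by
    have := congrArg ev0 hq
    simp only [map_mul, map_add] at this
    rw [ev0_X_le (by norm_num), ev0_X_le (by norm_num), ev0_X_le (by norm_num)] at this
    simpa using this
  have hz : ev0 q = 0 := mul_self_eq_zero.mp h0
  obtain ⟨u, v, w, h⟩ := mem3_of_ev0 q
  exact ⟨u, v, w, by rw [hz, add_zero] at h; exact h⟩


/-- a linear form as a polynomial -/
noncomputable def linForm (w : Fin 4 → K) : Poly := ∑ i, C (w i) * X i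

lemma exists_equiv (v : Fin 3 → (Fin 4 → K)) (hv : LinearIndependent K v) :
    ∃ e : Poly ≃ₐ[K] Poly, ∀ r : Fin 3, e (linForm (v r)) = X (Fin.castSucc r) := by
  classical
  have hne : Submodule.span K (Set.range v) ≠ ⊤ := by
    intro htop
    have hb : Module.Basis (Fin 3) K (Fin 4 → K) := Module.Basis.mk hv (le_of_eq htop.symm)
    have h3 : Module.finrank K (Fin 4 → K) = 3 := by
      rw [Module.finrank_eq_card_basis hb]; simp
    rw [Module.finrank_fintype_fun_eq_card] at h3
    simp at h3
  obtain ⟨x, hx⟩ : ∃ x, x ∉ Submodule.span K (Set.range v) := by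
    by_contra hc
    push_neg at hc
    exact hne (Submodule.eq_top_iff'.mpr hc)
  set vec : Fin 4 → (Fin 4 → K) := Fin.snoc v x with hvec
  have li : LinearIndependent K vec := linearIndependent_fin_snoc.mpr ⟨hv, hx⟩
  have hcard : Fintype.card (Fin 4) = Module.finrank K (Fin 4 → K) := by
    rw [Module.finrank_fintype_fun_eq_card]
  let bb : Module.Basis (Fin 4) K (Fin 4 → K) := basisOfLinearIndependentOfCardEqFinrank li hcard
  have hbb : ⇑bb = vec := coe_basisOfLinearIndependentOfCardEqFinrank li hcard
  let e0 : Module.Basis (Fin 4) K (Fin 4 → K) := Pi.basisFun K (Fin 4)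
  let M0 := e0.toMatrix ⇑bb
  have hinv : Invertible M0 := e0.invertibleToMatrix bb
  set N : Matrix (Fin 4) (Fin 4) K := Matrix.transpose (⅟M0) with hN
  set V : Matrix (Fin 4) (Fin 4) K := Matrix.transpose M0 with hV
  have hVapp : ∀ r i, V r i = vec r i := by
    intro r i
    rw [hV, Matrix.transpose_apply]
    show e0.repr (bb r) i = vec r i
    rw [hbb]
    simp [e0]
  have hVN : V * N = 1 := by
    rw [hV, hN, ← Matrix.transpose_mul, invOf_mul_self, Matrix.transpose_one]
  have hNV : N * V = 1 := by
    rw [hV, hN, ← Matrix.transpose_mul, mul_invOf_self, Matrix.transpose_one]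
  set τ : Poly →ₐ[K] Poly := aeval (fun l => ∑ j, C (V l j) * X j) with hτ
  set σa : Poly →ₐ[K] Poly := aeval (fun i => ∑ l, C (N i l) * X l) with hσ
  have key : ∀ (W U : Matrix (Fin 4) (Fin 4) K), W * U = 1 →
      ∀ r : Fin 4, (aeval (fun i : Fin 4 => ∑ l, C (U i l) * X l) : Poly →ₐ[K] Poly)
        (∑ i, C (W r i) * X i) = X r := by
    intro W U hWU r
    rw [map_sum]
    simp only [map_mul, aeval_X, aeval_C, algebraMap_eq]
    calc (∑ i, C (W r i) * ∑ l, C (U i l) * X l)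
        = ∑ i, ∑ l, C (W r i * U i l) * X l := by
          apply Finset.sum_congr rfl
          intro i _
          rw [Finset.mul_sum]
          apply Finset.sum_congr rfl
          intro l _
          rw [map_mul]; ring
      _ = ∑ l, ∑ i, C (W r i * U i l) * X l := Finset.sum_comm
      _ = ∑ l, C ((W * U) r l) * X l := by
          apply Finset.sum_congr rfl
          intro l _
          rw [Matrix.mul_apply, map_sum, Finset.sum_mul]
      _ = X r := by
          rw [hWU]
          rw [Finset.sum_eq_single r]
          · simp [Matrix.one_apply_eq]
          · intro b _ hb
            rw [Matrix.one_apply_ne (Ne.symm hb)]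
            simp
          · intro h
            exact absurd (Finset.mem_univ r) h
  have hτX : ∀ r : Fin 4, τ (X r) = ∑ j, C (V r j) * X j := fun r => by
    rw [hτ, aeval_X]
  have hσX : ∀ i : Fin 4, σa (X i) = ∑ l, C (N i l) * X l := fun i => by
    rw [hσ, aeval_X]
  have h1 : σa.comp τ = AlgHom.id K Poly := by
    apply MvPolynomial.algHom_ext
    intro r
    rw [AlgHom.comp_apply, AlgHom.id_apply, hτX, hσ]
    exact key V N hVN r
  have h2 : τ.comp σa = AlgHom.id K Poly := by
    apply MvPolynomial.algHom_ext
    intro i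
    rw [AlgHom.comp_apply, AlgHom.id_apply, hσX, hτ]
    exact key N V hNV i
  refine ⟨AlgEquiv.ofAlgHom σa τ h1 h2, ?_⟩
  intro r
  have hlf : linForm (v r) = τ (X (Fin.castSucc r)) := by
    rw [hτX, linForm]
    apply Finset.sum_congr rfl
    intro j _
    rw [hVapp, hvec, Fin.snoc_castSucc]
  rw [hlf]
  show σa (τ (X (Fin.castSucc r))) = X (Fin.castSucc r)
  rw [← AlgHom.comp_apply, h1, AlgHom.id_apply]

lemma linForm_isHomogeneous (w : Fin 4 → K) : (linForm w).IsHomogeneous 1 := by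
  apply MvPolynomial.IsHomogeneous.sum
  intro i _
  have := (isHomogeneous_C (Fin 4) (w i)).mul (isHomogeneous_X K i)
  simpa using this

lemma coeff_linForm_single (w : Fin 4 → K) (i : Fin 4) :
    coeff (Finsupp.single i 1) (linForm w) = w i := by
  rw [linForm]
  rw [coeff_sum]
  rw [Finset.sum_eq_single i]
  · rw [coeff_C_mul, coeff_X]
    simp
  · intro j _ hj
    rw [coeff_C_mul, coeff_X', if_neg, mul_zero]
    intro hc
    exact hj (Finsupp.single_left_injective one_ne_zero hc)
  · intro h
    exact absurd (Finset.mem_univ i) h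

lemma coeff_single_mul_homog0 {F : Poly} (hF : F.IsHomogeneous 0) (w : Fin 4 → K) (i : Fin 4) :
    coeff (Finsupp.single i 1) (F * linForm w) = coeff 0 F * w i := by
  rw [coeff_mul]
  rw [Finset.sum_eq_single ((0 : Fin 4 →₀ ℕ), Finsupp.single i 1)]
  · rw [coeff_linForm_single]
  · rintro ⟨a, b⟩ hab hne
    rw [Finset.HasAntidiagonal.mem_antidiagonal] at hab
    rcases eq_or_ne a 0 with rfl | ha
    · have hb : b = Finsupp.single i 1 := by rw [← hab, zero_add]
      exact absurd (by rw [hb]) hne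
    · rw [coeff_homog_ne hF (fun h => ha (dg_eq_zero h)), zero_mul]
  · intro h
    rw [Finset.HasAntidiagonal.mem_antidiagonal] at h
    simp at h

lemma homog_zero_eq_zero {F : Poly} (hF : F.IsHomogeneous 0) (h0 : coeff 0 F = 0) : F = 0 := by
  apply MvPolynomial.ext
  intro d
  rw [coeff_zero]
  rcases eq_or_ne (dg d) 0 with hd | hd
  · rw [dg_eq_zero hd, h0]
  · exact coeff_homog_ne hF hd

lemma pr_gen (v : Fin 3 → (Fin 4 → K)) (hv : LinearIndependent K v)
    (ρ a b c : Poly)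
    (h : ρ * ρ = a * linForm (v 0) + b * linForm (v 1) + c * linForm (v 2)) :
    ∃ u u' u'' : Poly,
      ρ = u * linForm (v 0) + u' * linForm (v 1) + u'' * linForm (v 2) := by
  obtain ⟨e, he⟩ := exists_equiv v hv
  have h0 : e (linForm (v 0)) = X 0 := he 0
  have h1 : e (linForm (v 1)) = X 1 := he 1
  have h2 : e (linForm (v 2)) = X 2 := he 2
  have happ := congrArg e h
  simp only [map_mul, map_add, h0, h1, h2] at happ
  obtain ⟨u, u', u'', hu⟩ := pr0 (e ρ) (e a) (e b) (e c) happ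
  refine ⟨e.symm u, e.symm u', e.symm u'', ?_⟩
  have := congrArg e.symm hu
  simp only [map_mul, map_add, AlgEquiv.symm_apply_apply] at this
  rw [this]
  congr 1
  · congr 1
    · rw [← h0, AlgEquiv.symm_apply_apply]
    · rw [← h1, AlgEquiv.symm_apply_apply]
  · rw [← h2, AlgEquiv.symm_apply_apply]

lemma syz_gen (v : Fin 3 → (Fin 4 → K)) (hv : LinearIndependent K v)
    (s : ℕ) (F G H : Poly) (hF : F.IsHomogeneous s) (hG : G.IsHomogeneous s)
    (hH : H.IsHomogeneous s)
    (hrel : F * linForm (v 0) + G * linForm (v 1) + H * linForm (v 2) = 0) :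
    ∃ Pp Qq Rr : Poly, Pp.IsHomogeneous (s - 1) ∧ Qq.IsHomogeneous (s - 1) ∧
      Rr.IsHomogeneous (s - 1) ∧
      F = Pp * linForm (v 1) + Qq * linForm (v 2) ∧
      G = -(Pp * linForm (v 0)) + Rr * linForm (v 2) ∧
      H = -(Qq * linForm (v 0)) - Rr * linForm (v 1) := by
  obtain ⟨e, he⟩ := exists_equiv v hv
  have h0 : e (linForm (v 0)) = X 0 := he 0
  have h1 : e (linForm (v 1)) = X 1 := he 1
  have h2 : e (linForm (v 2)) = X 2 := he 2
  have happ := congrArg e hrel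
  simp only [map_mul, map_add, map_zero, h0, h1, h2] at happ
  obtain ⟨P0, Q0, R0, hFe, hGe, hHe⟩ := syz0 (e F) (e G) (e H) happ
  have hsymm : ∀ (p : Poly) (r : Fin 3), e.symm p * linForm (v r) =
      e.symm (p * X (Fin.castSucc r)) := by
    intro p r
    rw [map_mul, ← he r, AlgEquiv.symm_apply_apply]
  have hFq : F = e.symm P0 * linForm (v 1) + e.symm Q0 * linForm (v 2) := by
    have := congrArg e.symm hFe
    rw [AlgEquiv.symm_apply_apply, map_add] at this
    rw [this, hsymm P0 1, hsymm Q0 2]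
    rfl
  have hGq : G = -(e.symm P0 * linForm (v 0)) + e.symm R0 * linForm (v 2) := by
    have := congrArg e.symm hGe
    rw [AlgEquiv.symm_apply_apply, map_add, map_neg] at this
    rw [this, hsymm P0 0, hsymm R0 2]
    rfl
  have hHq : H = -(e.symm Q0 * linForm (v 0)) - e.symm R0 * linForm (v 1) := by
    have := congrArg e.symm hHe
    rw [AlgEquiv.symm_apply_apply, map_sub, map_neg] at this
    rw [this, hsymm Q0 0, hsymm R0 1]
    rfl
  -- now truncate to homogeneous degree s - 1
  rcases s with _ | t
  · -- s = 0 : F, G, H are constants and must vanish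
    have hcoeffs : ∀ i : Fin 4,
        coeff 0 F * v 0 i + coeff 0 G * v 1 i + coeff 0 H * v 2 i = 0 := by
      intro i
      have := congrArg (coeff (Finsupp.single i 1)) hrel
      rw [coeff_zero, coeff_add, coeff_add, coeff_single_mul_homog0 hF,
        coeff_single_mul_homog0 hG, coeff_single_mul_homog0 hH] at this
      exact this
    have hzero : coeff 0 F = 0 ∧ coeff 0 G = 0 ∧ coeff 0 H = 0 := by
      have hli := Fintype.linearIndependent_iff.mp hv
        ![coeff 0 F, coeff 0 G, coeff 0 H] (by
          funext i
          have hc := hcoeffs i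
          simp only [Fin.sum_univ_three, Matrix.cons_val_zero, Matrix.cons_val_one,
            Matrix.head_cons, Pi.add_apply, Pi.smul_apply, smul_eq_mul, Pi.zero_apply]
          exact hc)
      exact ⟨by simpa using hli 0, by simpa using hli 1, by simpa using hli 2⟩
    obtain ⟨hF0, hG0, hH0⟩ := hzero
    have : F = 0 := homog_zero_eq_zero hF hF0
    have hGz : G = 0 := homog_zero_eq_zero hG hG0
    have hHz : H = 0 := homog_zero_eq_zero hH hH0
    exact ⟨0, 0, 0, isHomogeneous_zero _ _ _, isHomogeneous_zero _ _ _,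
      isHomogeneous_zero _ _ _, by rw [this]; ring, by rw [hGz]; ring, by rw [hHz]; ring⟩
  · set Pp := homogeneousComponent t (e.symm P0) with hPp
    set Qq := homogeneousComponent t (e.symm Q0) with hQq
    set Rr := homogeneousComponent t (e.symm R0) with hRr
    have hcF : F = Pp * linForm (v 1) + Qq * linForm (v 2) := by
      have := congrArg (homogeneousComponent (t + 1)) hFq
      rwa [homogeneousComponent_of_mem ((mem_homogeneousSubmodule _ _).mpr hF), if_pos rfl,
        map_add, hc_mul_homog1 t _ _ (linForm_isHomogeneous _),
        hc_mul_homog1 t _ _ (linForm_isHomogeneous _)] at this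
    have hcG : G = -(Pp * linForm (v 0)) + Rr * linForm (v 2) := by
      have := congrArg (homogeneousComponent (t + 1)) hGq
      rwa [homogeneousComponent_of_mem ((mem_homogeneousSubmodule _ _).mpr hG), if_pos rfl,
        map_add, map_neg, hc_mul_homog1 t _ _ (linForm_isHomogeneous _),
        hc_mul_homog1 t _ _ (linForm_isHomogeneous _)] at this
    have hcH : H = -(Qq * linForm (v 0)) - Rr * linForm (v 1) := by
      have := congrArg (homogeneousComponent (t + 1)) hHq
      rwa [homogeneousComponent_of_mem ((mem_homogeneousSubmodule _ _).mpr hH), if_pos rfl,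
        map_sub, map_neg, hc_mul_homog1 t _ _ (linForm_isHomogeneous _),
        hc_mul_homog1 t _ _ (linForm_isHomogeneous _)] at this
    exact ⟨Pp, Qq, Rr, homogeneousComponent_isHomogeneous t _,
      homogeneousComponent_isHomogeneous t _, homogeneousComponent_isHomogeneous t _,
      hcF, hcG, hcH⟩

end Syzygy

section Bridge

lemma coeP_neg (p : Poly) : ((-p : Poly) : P) = -(p : P) := by
  rw [← MvPolynomial.coeToMvPowerSeries.ringHom_apply, map_neg,
    MvPolynomial.coeToMvPowerSeries.ringHom_apply]

lemma coeP_sub (p q : Poly) : ((p - q : Poly) : P) = (p : P) - (q : P) := by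
  rw [← MvPolynomial.coeToMvPowerSeries.ringHom_apply, map_sub,
    MvPolynomial.coeToMvPowerSeries.ringHom_apply, MvPolynomial.coeToMvPowerSeries.ringHom_apply]

lemma cmpP_one_eq_linForm (A : P) : cmpP 1 A = linForm (linPart A) := by
  apply MvPolynomial.ext
  intro d
  rw [coeff_cmpP, linForm]
  rw [MvPolynomial.coeff_sum]
  rcases eq_or_ne (dg d) 1 with hd | hd
  · obtain ⟨j, rfl⟩ := dg_eq_one hd
    rw [if_pos hd]
    rw [Finset.sum_eq_single j]
    · rw [MvPolynomial.coeff_C_mul, MvPolynomial.coeff_X]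
      rw [if_pos rfl]
      rw [mul_one, linPart]
    · intro i _ hij
      rw [MvPolynomial.coeff_C_mul, MvPolynomial.coeff_X', if_neg, mul_zero]
      intro hc
      exact hij (Finsupp.single_left_injective one_ne_zero hc)
    · intro h
      exact absurd (Finset.mem_univ j) h
  · rw [if_neg hd]
    symm
    apply Finset.sum_eq_zero
    intro i _
    rw [MvPolynomial.coeff_C_mul, MvPolynomial.coeff_X', if_neg, mul_zero]
    intro hc
    exact hd (by rw [← hc, dg_single])

lemma exists_rep {A B C x : P} (hx : x ∈ Ideal.span {A, B, C}) :
    ∃ f g h : P, x = f * A + g * B + h * C := by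
  rw [Ideal.mem_span_insert] at hx
  obtain ⟨f, z, hz, rfl⟩ := hx
  rw [Ideal.mem_span_insert] at hz
  obtain ⟨g, z2, hz2, rfl⟩ := hz
  rw [Ideal.mem_span_singleton] at hz2
  obtain ⟨h3, rfl⟩ := hz2
  exact ⟨f, g, h3, by ring⟩

variable {A B C : P}

lemma std_aux (hA : A ∈ Mi 1) (hB : B ∈ Mi 1) (hC : C ∈ Mi 1)
    (hind : LinearIndependent K ![linPart A, linPart B, linPart C]) :
    ∀ (t s : ℕ) (f g h : P), f ∈ Mi s → g ∈ Mi s → h ∈ Mi s →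
      f * A + g * B + h * C ∈ Mi (s + 1 + t) →
      ∃ u u' u'' : Poly, cmpP (s + 1 + t) (f * A + g * B + h * C) =
        u * cmpP 1 A + u' * cmpP 1 B + u'' * cmpP 1 C := by
  have hv0 : (![linPart A, linPart B, linPart C] : Fin 3 → (Fin 4 → K)) 0 = linPart A := rfl
  have hv1 : (![linPart A, linPart B, linPart C] : Fin 3 → (Fin 4 → K)) 1 = linPart B := rfl
  have hv2 : (![linPart A, linPart B, linPart C] : Fin 3 → (Fin 4 → K)) 2 = linPart C := rfl
  have hlA : cmpP 1 A = linForm (![linPart A, linPart B, linPart C] 0) := by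
    rw [hv0, cmpP_one_eq_linForm]
  have hlB : cmpP 1 B = linForm (![linPart A, linPart B, linPart C] 1) := by
    rw [hv1, cmpP_one_eq_linForm]
  have hlC : cmpP 1 C = linForm (![linPart A, linPart B, linPart C] 2) := by
    rw [hv2, cmpP_one_eq_linForm]
  intro t
  induction t with
  | zero =>
    intro s f g h hf hg hh _
    refine ⟨cmpP s f, cmpP s g, cmpP s h, ?_⟩
    rw [cmpP_add, cmpP_add]
    rw [show s + 1 + 0 = s + 1 from rfl]
    rw [cmpP_mul hf hA, cmpP_mul hg hB, cmpP_mul hh hC]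
  | succ t ih =>
    intro s f g h hf hg hh hx
    have hzero : cmpP (s + 1) (f * A + g * B + h * C) = 0 :=
      cmpP_eq_zero hx (by omega)
    have hrel : cmpP s f * linForm (![linPart A, linPart B, linPart C] 0) +
        cmpP s g * linForm (![linPart A, linPart B, linPart C] 1) +
        cmpP s h * linForm (![linPart A, linPart B, linPart C] 2) = 0 := by
      rw [← hlA, ← hlB, ← hlC]
      rw [← cmpP_mul hf hA, ← cmpP_mul hg hB, ← cmpP_mul hh hC, ← cmpP_add, ← cmpP_add]
      exact hzero
    obtain ⟨Pp, Qq, Rr, hPh, hQh, hRh, hFq, hGq, hHq⟩ :=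
      syz_gen _ hind s _ _ _ (cmpP_isHomogeneous s f) (cmpP_isHomogeneous s g)
        (cmpP_isHomogeneous s h) hrel
    rw [← hlB, ← hlC] at hFq
    rw [← hlA, ← hlC] at hGq
    rw [← hlA, ← hlB] at hHq
    -- coerced identities
    have hFc : (↑(cmpP s f) : P) = ↑Pp * ↑(cmpP 1 B) + ↑Qq * ↑(cmpP 1 C) := by
      rw [hFq, MvPolynomial.coe_add, MvPolynomial.coe_mul, MvPolynomial.coe_mul]
    have hGc : (↑(cmpP s g) : P) = -(↑Pp * ↑(cmpP 1 A)) + ↑Rr * ↑(cmpP 1 C) := by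
      rw [hGq, MvPolynomial.coe_add, coeP_neg, MvPolynomial.coe_mul, MvPolynomial.coe_mul]
    have hHc : (↑(cmpP s h) : P) = -(↑Qq * ↑(cmpP 1 A)) - ↑Rr * ↑(cmpP 1 B) := by
      rw [hHq, coeP_sub, coeP_neg, MvPolynomial.coe_mul, MvPolynomial.coe_mul]
    set f' : P := f - ↑(cmpP s f) - ↑Pp * (B - ↑(cmpP 1 B)) - ↑Qq * (C - ↑(cmpP 1 C)) with hf'
    set g' : P := g - ↑(cmpP s g) + ↑Pp * (A - ↑(cmpP 1 A)) - ↑Rr * (C - ↑(cmpP 1 C)) with hg'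
    set h' : P := h - ↑(cmpP s h) + ↑Qq * (A - ↑(cmpP 1 A)) + ↑Rr * (B - ↑(cmpP 1 B)) with hh'
    have hf'm : f' ∈ Mi (s + 1) := by
      rw [hf']
      apply Ideal.sub_mem
      apply Ideal.sub_mem
      · exact sub_cmpP_mem hf
      · exact Mi_antitone (by omega) (mul_mem_Mi (coe_homog_mem_Mi hPh) (sub_cmpP_mem hB))
      · exact Mi_antitone (by omega) (mul_mem_Mi (coe_homog_mem_Mi hQh) (sub_cmpP_mem hC))
    have hg'm : g' ∈ Mi (s + 1) := by
      rw [hg']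
      apply Ideal.sub_mem
      apply Ideal.add_mem
      · exact sub_cmpP_mem hg
      · exact Mi_antitone (by omega) (mul_mem_Mi (coe_homog_mem_Mi hPh) (sub_cmpP_mem hA))
      · exact Mi_antitone (by omega) (mul_mem_Mi (coe_homog_mem_Mi hRh) (sub_cmpP_mem hC))
    have hh'm : h' ∈ Mi (s + 1) := by
      rw [hh']
      apply Ideal.add_mem
      apply Ideal.add_mem
      · exact sub_cmpP_mem hh
      · exact Mi_antitone (by omega) (mul_mem_Mi (coe_homog_mem_Mi hQh) (sub_cmpP_mem hA))
      · exact Mi_antitone (by omega) (mul_mem_Mi (coe_homog_mem_Mi hRh) (sub_cmpP_mem hB))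
    have heq : f' * A + g' * B + h' * C = f * A + g * B + h * C := by
      rw [hf', hg', hh']
      linear_combination (-A) * hFc + (-B) * hGc + (-C) * hHc
    have hx' : f' * A + g' * B + h' * C ∈ Mi (s + 1 + 1 + t) := by
      rw [heq]
      have h99 : s + 1 + 1 + t = s + 1 + (t + 1) := by omega
      rw [h99]
      exact hx
    obtain ⟨u, u', u'', hu⟩ := ih (s + 1) f' g' h' hf'm hg'm hh'm hx'
    refine ⟨u, u', u'', ?_⟩
    rw [show s + 1 + (t + 1) = s + 1 + 1 + t by omega, ← heq]
    exact hu

lemma step (hA : A ∈ Mi 1) (hB : B ∈ Mi 1) (hC : C ∈ Mi 1)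
    (hind : LinearIndependent K ![linPart A, linPart B, linPart C])
    (k : ℕ) (r : P) (hr : r ∈ Mi (k + 2)) (hsq : r * r ∈ Ideal.span {A, B, C}) :
    ∃ u v w : P, u ∈ Mi (k + 1) ∧ v ∈ Mi (k + 1) ∧ w ∈ Mi (k + 1) ∧
      r - (u * A + v * B + w * C) ∈ Mi (k + 3) := by
  obtain ⟨f, g, h, hrep⟩ := exists_rep hsq
  have hr2 : r * r ∈ Mi (0 + 1 + (2 * k + 3)) := by
    have := mul_mem_Mi hr hr
    exact Mi_antitone (by omega) this
  have hM0 : ∀ x : P, x ∈ Mi 0 := fun x d hd => absurd hd (Nat.not_lt_zero _)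
  obtain ⟨u1, u2, u3, hstd⟩ := std_aux hA hB hC hind (2 * k + 3) 0 f g h
    (hM0 f) (hM0 g) (hM0 h) (by rw [← hrep]; exact hr2)
  rw [← hrep] at hstd
  have hρρ : cmpP (0 + 1 + (2 * k + 3)) (r * r) = cmpP (k + 2) r * cmpP (k + 2) r := by
    rw [show 0 + 1 + (2 * k + 3) = (k + 2) + (k + 2) by omega]
    exact cmpP_mul hr hr
  rw [hρρ] at hstd
  -- now apply the prime-avoidance lemma
  have hv0 : (![linPart A, linPart B, linPart C] : Fin 3 → (Fin 4 → K)) 0 = linPart A := rfl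
  have hv1 : (![linPart A, linPart B, linPart C] : Fin 3 → (Fin 4 → K)) 1 = linPart B := rfl
  have hv2 : (![linPart A, linPart B, linPart C] : Fin 3 → (Fin 4 → K)) 2 = linPart C := rfl
  have hlA : cmpP 1 A = linForm (![linPart A, linPart B, linPart C] 0) := by
    rw [hv0, cmpP_one_eq_linForm]
  have hlB : cmpP 1 B = linForm (![linPart A, linPart B, linPart C] 1) := by
    rw [hv1, cmpP_one_eq_linForm]
  have hlC : cmpP 1 C = linForm (![linPart A, linPart B, linPart C] 2) := by
    rw [hv2, cmpP_one_eq_linForm]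
  rw [hlA, hlB, hlC] at hstd
  obtain ⟨a1, a2, a3, hρ⟩ := pr_gen _ hind _ _ _ _ hstd
  -- truncate
  have htr : cmpP (k + 2) r =
      MvPolynomial.homogeneousComponent (k + 1) a1 * linForm (![linPart A, linPart B, linPart C] 0) +
      MvPolynomial.homogeneousComponent (k + 1) a2 * linForm (![linPart A, linPart B, linPart C] 1) +
      MvPolynomial.homogeneousComponent (k + 1) a3 * linForm (![linPart A, linPart B, linPart C] 2) := by
    have := congrArg (MvPolynomial.homogeneousComponent (k + 2)) hρ
    rwa [MvPolynomial.homogeneousComponent_of_mem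
        ((MvPolynomial.mem_homogeneousSubmodule _ _).mpr (cmpP_isHomogeneous (k + 2) r)),
      if_pos rfl, map_add, map_add,
      show k + 2 = (k + 1) + 1 from rfl,
      hc_mul_homog1 (k + 1) _ _ (linForm_isHomogeneous _),
      hc_mul_homog1 (k + 1) _ _ (linForm_isHomogeneous _),
      hc_mul_homog1 (k + 1) _ _ (linForm_isHomogeneous _)] at this
  rw [← hlA, ← hlB, ← hlC] at htr
  set u : P := ↑(MvPolynomial.homogeneousComponent (k + 1) a1) with hu
  set v : P := ↑(MvPolynomial.homogeneousComponent (k + 1) a2) with hv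
  set w : P := ↑(MvPolynomial.homogeneousComponent (k + 1) a3) with hw
  have hum : u ∈ Mi (k + 1) :=
    coe_homog_mem_Mi (MvPolynomial.homogeneousComponent_isHomogeneous (k + 1) a1)
  have hvm : v ∈ Mi (k + 1) :=
    coe_homog_mem_Mi (MvPolynomial.homogeneousComponent_isHomogeneous (k + 1) a2)
  have hwm : w ∈ Mi (k + 1) :=
    coe_homog_mem_Mi (MvPolynomial.homogeneousComponent_isHomogeneous (k + 1) a3)
  refine ⟨u, v, w, hum, hvm, hwm, ?_⟩
  have hρc : (↑(cmpP (k + 2) r) : P) = u * ↑(cmpP 1 A) + v * ↑(cmpP 1 B) + w * ↑(cmpP 1 C) := by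
    rw [htr, MvPolynomial.coe_add, MvPolynomial.coe_add, MvPolynomial.coe_mul,
      MvPolynomial.coe_mul, MvPolynomial.coe_mul, hu, hv, hw]
  have hval : r - (u * A + v * B + w * C) =
      (r - ↑(cmpP (k + 2) r)) - u * (A - ↑(cmpP 1 A)) - v * (B - ↑(cmpP 1 B))
        - w * (C - ↑(cmpP 1 C)) := by
    linear_combination hρc
  rw [hval]
  apply Ideal.sub_mem
  apply Ideal.sub_mem
  apply Ideal.sub_mem
  · exact sub_cmpP_mem hr
  · exact Mi_antitone (by omega) (mul_mem_Mi hum (sub_cmpP_mem hA))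
  · exact Mi_antitone (by omega) (mul_mem_Mi hvm (sub_cmpP_mem hB))
  · exact Mi_antitone (by omega) (mul_mem_Mi hwm (sub_cmpP_mem hC))

end Bridge

section Limit

def Inv (A B C : P) (k : ℕ) (r : P) (y : P × P × P) : Prop :=
  r ∈ Mi (k+2) ∧ r * r ∈ Ideal.span {A, B, C} ∧ y.1 ∈ Mi (k+1) ∧ y.2.1 ∈ Mi (k+1) ∧
    y.2.2 ∈ Mi (k+1) ∧ r - (y.1 * A + y.2.1 * B + y.2.2 * C) ∈ Mi (k+3)

abbrev StepHyp (A B C : P) : Prop :=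
  ∀ (k : ℕ) (r : P), r ∈ Mi (k+2) → r * r ∈ Ideal.span {A, B, C} →
    ∃ y : P × P × P, y.1 ∈ Mi (k+1) ∧ y.2.1 ∈ Mi (k+1) ∧ y.2.2 ∈ Mi (k+1) ∧
      r - (y.1 * A + y.2.1 * B + y.2.2 * C) ∈ Mi (k+3)

noncomputable def mkSt (A B C : P) (hs : StepHyp A B C) (k : ℕ) (r : P)
    (h1 : r ∈ Mi (k+2)) (h2 : r * r ∈ Ideal.span {A, B, C}) :
    Σ' ry : P × (P × P × P), Inv A B C k ry.1 ry.2 :=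
  ⟨⟨r, (hs k r h1 h2).choose⟩, h1, h2, (hs k r h1 h2).choose_spec.1,
    (hs k r h1 h2).choose_spec.2.1, (hs k r h1 h2).choose_spec.2.2.1,
    (hs k r h1 h2).choose_spec.2.2.2⟩

lemma sq_sub_mem {I : Ideal P} {r z : P} (hr : r * r ∈ I) (hz : z ∈ I) :
    (r - z) * (r - z) ∈ I := by
  have h : (r - z) * (r - z) = r * r + (z - r - r) * z := by ring
  rw [h]
  exact Ideal.add_mem _ hr (Ideal.mul_mem_left _ _ hz)

lemma combo_mem (A B C u v w : P) : u * A + v * B + w * C ∈ Ideal.span {A, B, C} := by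
  apply Ideal.add_mem
  apply Ideal.add_mem
  · exact Ideal.mul_mem_left _ _ (Ideal.subset_span (by simp))
  · exact Ideal.mul_mem_left _ _ (Ideal.subset_span (by simp))
  · exact Ideal.mul_mem_left _ _ (Ideal.subset_span (by simp))

noncomputable def St (A B C d0 : P) (hs : StepHyp A B C) (hd0 : d0 ∈ Mi 2)
    (hsq : d0 * d0 ∈ Ideal.span {A, B, C}) :
    (k : ℕ) → Σ' ry : P × (P × P × P), Inv A B C k ry.1 ry.2
  | 0 => mkSt A B C hs 0 d0 hd0 hsq
  | (k+1) =>
    let prev := St A B C d0 hs hd0 hsq k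
    mkSt A B C hs (k+1)
      (prev.1.1 - (prev.1.2.1 * A + prev.1.2.2.1 * B + prev.1.2.2.2 * C))
      prev.2.2.2.2.2.2
      (sq_sub_mem prev.2.2.1 (combo_mem A B C _ _ _))

noncomputable def Usum (u : ℕ → P) (j : ℕ) : P := ∑ k ∈ Finset.range j, u k

noncomputable def Ulim (u : ℕ → P) : P :=
  fun d => MvPowerSeries.coeff d (Usum u (dg d + 1))

lemma coeff_Ulim (u : ℕ → P) (d : Fin 4 →₀ ℕ) :
    MvPowerSeries.coeff d (Ulim u) = MvPowerSeries.coeff d (Usum u (dg d + 1)) := rfl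

lemma coeff_Usum_stable {u : ℕ → P} (hu : ∀ k, u k ∈ Mi (k+1)) {d : Fin 4 →₀ ℕ} {j : ℕ}
    (hj : dg d + 1 ≤ j) :
    MvPowerSeries.coeff d (Usum u j) = MvPowerSeries.coeff d (Ulim u) := by
  rw [coeff_Ulim]
  rw [Usum, Usum, Finset.range_eq_Ico, Finset.range_eq_Ico,
    ← Finset.sum_Ico_consecutive _ (Nat.zero_le (dg d + 1)) hj, map_add]
  have hz : MvPowerSeries.coeff d (∑ k ∈ Finset.Ico (dg d + 1) j, u k) = 0 := by
    rw [map_sum]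
    apply Finset.sum_eq_zero
    intro k hk
    rw [Finset.mem_Ico] at hk
    exact hu k d (by omega)
  rw [hz, add_zero]

lemma coeff_mul_congr {f f' g : P} {d : Fin 4 →₀ ℕ}
    (h : ∀ a, a ≤ d → MvPowerSeries.coeff a f = MvPowerSeries.coeff a f') :
    MvPowerSeries.coeff d (f * g) = MvPowerSeries.coeff d (f' * g) := by
  rw [MvPowerSeries.coeff_mul, MvPowerSeries.coeff_mul]
  apply Finset.sum_congr rfl
  rintro ⟨a, b⟩ hab
  rw [Finset.HasAntidiagonal.mem_antidiagonal] at hab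
  rw [h a (le_iff_exists_add.mpr ⟨b, hab.symm⟩)]

lemma main_core {A B C : P} (hA : A ∈ Mi 1) (hB : B ∈ Mi 1) (hC : C ∈ Mi 1)
    (hind : LinearIndependent K ![linPart A, linPart B, linPart C])
    (d0 : P) (hd0 : d0 ∈ Mi 2) (hsq : d0 * d0 ∈ Ideal.span {A, B, C}) :
    ∃ U V W : P, U ∈ Mi 1 ∧ V ∈ Mi 1 ∧ W ∈ Mi 1 ∧ d0 = U * A + V * B + W * C := by
  have hs : StepHyp A B C := by
    intro k r h1 h2
    obtain ⟨u, v, w, hu, hv, hw, hrem⟩ := step hA hB hC hind k r h1 h2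
    exact ⟨(u, v, w), hu, hv, hw, hrem⟩
  set SS := St A B C d0 hs hd0 hsq with hSS
  set rr : ℕ → P := fun k => (SS k).1.1 with hrr
  set uu : ℕ → P := fun k => (SS k).1.2.1 with huu
  set vv : ℕ → P := fun k => (SS k).1.2.2.1 with hvv
  set ww : ℕ → P := fun k => (SS k).1.2.2.2 with hww
  have hr0 : rr 0 = d0 := rfl
  have hrsucc : ∀ k, rr (k+1) = rr k - (uu k * A + vv k * B + ww k * C) := fun k => rfl
  have hum : ∀ k, uu k ∈ Mi (k+1) := fun k => (SS k).2.2.2.1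
  have hvm : ∀ k, vv k ∈ Mi (k+1) := fun k => (SS k).2.2.2.2.1
  have hwm : ∀ k, ww k ∈ Mi (k+1) := fun k => (SS k).2.2.2.2.2.1
  have hrm : ∀ k, rr k ∈ Mi (k+2) := fun k => (SS k).2.1
  have hmemM1 : ∀ (u : ℕ → P), (∀ k, u k ∈ Mi (k+1)) → Ulim u ∈ Mi 1 := by
    intro u hu d hd
    rw [coeff_Ulim, Usum, map_sum]
    apply Finset.sum_eq_zero
    intro k _
    exact hu k d (by omega)
  refine ⟨Ulim uu, Ulim vv, Ulim ww, hmemM1 uu hum, hmemM1 vv hvm, hmemM1 ww hwm, ?_⟩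
  apply MvPowerSeries.ext
  intro d
  have h1 : MvPowerSeries.coeff d (Ulim uu * A) =
      MvPowerSeries.coeff d (Usum uu (dg d + 1) * A) :=
    coeff_mul_congr (fun a ha =>
      (coeff_Usum_stable hum (by have := dg_le_of_le ha; omega)).symm)
  have h2 : MvPowerSeries.coeff d (Ulim vv * B) =
      MvPowerSeries.coeff d (Usum vv (dg d + 1) * B) :=
    coeff_mul_congr (fun a ha =>
      (coeff_Usum_stable hvm (by have := dg_le_of_le ha; omega)).symm)
  have h3 : MvPowerSeries.coeff d (Ulim ww * C) =
      MvPowerSeries.coeff d (Usum ww (dg d + 1) * C) :=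
    coeff_mul_congr (fun a ha =>
      (coeff_Usum_stable hwm (by have := dg_le_of_le ha; omega)).symm)
  rw [map_add, map_add, h1, h2, h3]
  have hsum : Usum uu (dg d + 1) * A + Usum vv (dg d + 1) * B + Usum ww (dg d + 1) * C =
      rr 0 - rr (dg d + 1) := by
    rw [Usum, Usum, Usum, Finset.sum_mul, Finset.sum_mul, Finset.sum_mul,
      ← Finset.sum_add_distrib, ← Finset.sum_add_distrib]
    rw [← Finset.sum_range_sub' rr (dg d + 1)]
    apply Finset.sum_congr rfl
    intro k _
    rw [hrsucc k]
    ring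
  rw [← map_add, ← map_add, hsum, hr0, map_sub]
  have hz : MvPowerSeries.coeff d (rr (dg d + 1)) = 0 :=
    hrm (dg d + 1) d (by omega)
  rw [hz, sub_zero]

end Limit

end Aux

theorem stmt_18 (A B C ε : P)
    (hA : A ∈ m) (hB : B ∈ m) (hC : C ∈ m) (hε : ε ∈ m)
    (hind : LinearIndependent (ZMod 2) ![linPart A, linPart B, linPart C])
    (hεA : ε - A ∈ m ^ 2)
    (hsq : A ^ 2 - ε ^ 2 ∈ Ideal.span {A, B, C}) :
    A - ε ∈ m * Ideal.span {A, B, C} ∧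
    ∃ a ∈ m * Ideal.span {A, B}, ∃ c ∈ m * Ideal.span {C}, A + a = ε + c := by
  have h2P : (2 : P) = 0 := by
    have h1 : MvPowerSeries.C (σ := Fin 4) (2 : ZMod 2) = (2 : P) := map_ofNat _ 2
    have h2 : (2 : ZMod 2) = 0 := by decide
    rw [h2, map_zero] at h1
    exact h1.symm
  have hd2 : A - ε ∈ Aux.Mi 2 := by
    have : A - ε = -(ε - A) := by ring
    rw [this]
    exact neg_mem (Aux.m_sq_le_Mi_two hεA)
  have hdd : (A - ε) * (A - ε) = A ^ 2 - ε ^ 2 := by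
    linear_combination (ε ^ 2 - A * ε) * h2P
  have hsq' : (A - ε) * (A - ε) ∈ Ideal.span {A, B, C} := by
    rw [hdd]; exact hsq
  obtain ⟨U, V, W, hU, hV, hW, hrep⟩ :=
    Aux.main_core (Aux.m_le_Mi_one hA) (Aux.m_le_Mi_one hB) (Aux.m_le_Mi_one hC) hind
      (A - ε) hd2 hsq'
  have hUm : U ∈ m := Aux.Mi_one_le_m hU
  have hVm : V ∈ m := Aux.Mi_one_le_m hV
  have hWm : W ∈ m := Aux.Mi_one_le_m hW
  constructor
  · rw [hrep]
    apply Ideal.add_mem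
    apply Ideal.add_mem
    · exact Ideal.mul_mem_mul hUm (Ideal.subset_span (by simp))
    · exact Ideal.mul_mem_mul hVm (Ideal.subset_span (by simp))
    · exact Ideal.mul_mem_mul hWm (Ideal.subset_span (by simp))
  · refine ⟨-(U * A + V * B), ?_, W * C, ?_, ?_⟩
    · apply neg_mem
      apply Ideal.add_mem
      · exact Ideal.mul_mem_mul hUm (Ideal.subset_span (by simp))
      · exact Ideal.mul_mem_mul hVm (Ideal.subset_span (by simp))
    · exact Ideal.mul_mem_mul hWm (Ideal.subset_span (by simp))
    · linear_combination hrep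
end
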